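/- Let R be a unitary ring, let a, s ≥ 1, and let σ ∈ Σ_{sa} have cycle type λ = (a, a, …, a) with a appearing s times (i.e. σ is a product of s disjoint a-cycles). Then S_{sa}(σ,R) is isomorphic as a ring to the matrix ring M_s(R[C_a]) over the group ring of the cyclic group C_a of order a. -/

import Mathlib

open Matrix

/-- The `σ`-invariant matrix ring `S_n(σ,R) = {a ∈ M_n(R) | a_{ij} = a_{σ(i)σ(j)}}`. -/
def invariantSubring (R : Type*) [Ring R] {n : ℕ} (σ : Equiv.Perm (Fin n)) :
    Subring (Matrix (Fin n) (Fin n) R) where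
  carrier := {a | ∀ i j, a i j = a (σ i) (σ j)}
  zero_mem' := fun i j => rfl
  one_mem' := fun i j => by
    simp [Matrix.one_apply, EmbeddingLike.apply_eq_iff_eq]
  add_mem' := fun {a b} ha hb i j => by
    simp only [Matrix.add_apply]; rw [ha i j, hb i j]
  neg_mem' := fun {a} ha i j => by
    simp only [Matrix.neg_apply]; rw [ha i j]
  mul_mem' := fun {a b} ha hb i j => by
    simp only [Matrix.mul_apply]
    calc ∑ k, a i k * b k j
        = ∑ k, a (σ i) (σ k) * b (σ k) (σ j) :=
          Finset.sum_congr rfl fun k _ => by rw [← ha, ← hb]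
      _ = ∑ k, a (σ i) k * b k (σ j) := Equiv.sum_comp σ fun k => a (σ i) k * b k (σ j)

/-- `σ ∈ Σ_n` has cycle type `(lam 0, …, lam (s-1))`, where fixed points are counted
as parts equal to `1`: the multiset of lengths of the disjoint cycles of `σ`, together
with one part `1` for each fixed point, is the multiset of values of `lam`. -/
def HasFullCycleType {n s : ℕ} (σ : Equiv.Perm (Fin n)) (lam : Fin s → ℕ) : Prop :=
  σ.cycleType + Multiset.replicate (n - σ.cycleType.sum) 1 = (List.ofFn lam : Multiset ℕ)

set_option linter.unusedSectionVars false


section Shift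
variable (a s : ℕ) [NeZero a]

def shiftPerm : Equiv.Perm (Fin s × ZMod a) :=
  Equiv.prodCongr (Equiv.refl (Fin s)) (Equiv.addRight (1 : ZMod a))

lemma shiftPerm_apply (p : Fin s × ZMod a) : shiftPerm a s p = (p.1, p.2 + 1) := rfl

lemma shiftPerm_pow (m : ℕ) (p : Fin s × ZMod a) :
    ((shiftPerm a s) ^ m) p = (p.1, p.2 + m) := by
  induction m generalizing p with
  | zero => simp
  | succ m ih =>
    rw [pow_succ, Equiv.Perm.mul_apply, shiftPerm_apply, ih]
    simp only [Prod.mk.injEq, true_and]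
    push_cast
    ring

lemma shiftPerm_sameCycle_iff (p q : Fin s × ZMod a) :
    (shiftPerm a s).SameCycle p q ↔ p.1 = q.1 := by
  constructor
  · intro h
    obtain ⟨i, -, hi⟩ := h.exists_pow_eq'
    rw [shiftPerm_pow] at hi
    exact (congrArg Prod.fst hi.symm).symm
  · intro h
    refine ⟨((q.2 - p.2).val : ℤ), ?_⟩
    rw [zpow_natCast, shiftPerm_pow, ZMod.natCast_val, ZMod.cast_id]
    rw [show p.2 + (q.2 - p.2) = q.2 by ring, h]

lemma shiftPerm_support (ha : 2 ≤ a) : (shiftPerm a s).support = Finset.univ := by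
  ext p
  simp only [Equiv.Perm.mem_support, Finset.mem_univ, iff_true, shiftPerm_apply]
  intro hc
  have : p.2 + 1 = p.2 + 0 := by rw [add_zero]; exact congrArg Prod.snd hc
  have h1 : (1 : ZMod a) = 0 := by exact add_left_cancel this
  haveI : Fact (1 < a) := ⟨ha⟩
  exact one_ne_zero h1

lemma shiftPerm_cycleType (ha : 2 ≤ a) :
    (shiftPerm a s).cycleType = Multiset.replicate s a := by
  haveI : Fact (1 < a) := ⟨ha⟩
  have hall : ∀ r ∈ (shiftPerm a s).cycleType, r = a := by
    intro r hr
    rw [Equiv.Perm.cycleType_def, Multiset.mem_map] at hr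
    obtain ⟨c, hc, rfl⟩ := hr
    obtain ⟨x, hx⟩ := (Equiv.Perm.mem_cycleFactorsFinset_iff.mp hc).1.nonempty_support
    have hcx : c = (shiftPerm a s).cycleOf x := Equiv.Perm.cycle_is_cycleOf hx hc
    have hsupp : ((shiftPerm a s).cycleOf x).support = {x.1} ×ˢ Finset.univ := by
      ext y
      simp only [Equiv.Perm.mem_support_cycleOf_iff, Finset.mem_product,
        Finset.mem_singleton, Finset.mem_univ, and_true, shiftPerm_sameCycle_iff,
        shiftPerm_support a s ha, Finset.mem_univ, and_true]
      exact eq_comm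
    simp only [Function.comp_apply, hcx, hsupp]
    simp [Finset.card_product, ZMod.card]
  have hsum : (shiftPerm a s).cycleType.sum = s * a := by
    rw [Equiv.Perm.sum_cycleType, shiftPerm_support a s ha]
    simp [Finset.card_univ, ZMod.card, Fintype.card_prod]
  have hrep : (shiftPerm a s).cycleType
      = Multiset.replicate (Multiset.card (shiftPerm a s).cycleType) a :=
    Multiset.eq_replicate_card.mpr hall
  have hcard : Multiset.card (shiftPerm a s).cycleType = s := by
    have h2 := hsum
    rw [hrep, Multiset.sum_replicate, smul_eq_mul] at h2
    exact Nat.eq_of_mul_eq_mul_right (by omega) h2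
  rw [hrep, hcard]

end Shift

lemma cycleType_of_hasFull {n s : ℕ} {σ : Equiv.Perm (Fin n)} {lam : Fin s → ℕ}
    (h : HasFullCycleType σ lam) :
    σ.cycleType = Multiset.filter (fun x => x ≠ 1) (List.ofFn lam : Multiset ℕ) := by
  rw [← h, Multiset.filter_add]
  have h1 : Multiset.filter (fun x => x ≠ 1) σ.cycleType = σ.cycleType :=
    Multiset.filter_eq_self.mpr fun x hx => by
      have := Equiv.Perm.two_le_of_mem_cycleType hx; omega
  have h2 : Multiset.filter (fun x => x ≠ 1)
      (Multiset.replicate (n - σ.cycleType.sum) 1) = 0 := by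
    rw [Multiset.filter_eq_nil]
    intro x hx
    rw [Multiset.eq_of_mem_replicate hx]
    simp
  rw [h1, h2, add_zero]

lemma ofFn_const_eq {s a : ℕ} :
    ((List.ofFn (fun _ : Fin s => a)) : Multiset ℕ) = Multiset.replicate s a := by
  rw [List.ofFn_const]
  rfl

lemma filter_replicate_ne_one {s a : ℕ} (ha : 2 ≤ a) :
    Multiset.filter (fun x => x ≠ 1) (Multiset.replicate s a) = Multiset.replicate s a :=
  Multiset.filter_eq_self.mpr fun x hx => by
    rw [Multiset.eq_of_mem_replicate hx]; omega

lemma filter_replicate_one {s : ℕ} :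
    Multiset.filter (fun x => x ≠ 1) (Multiset.replicate s 1) = 0 := by
  rw [Multiset.filter_eq_nil]
  intro x hx
  simp [Multiset.eq_of_mem_replicate hx]

/-- cycleType is invariant under transport along an equivalence. -/
lemma cycleType_permCongr {α β : Type*} [Fintype α] [DecidableEq α] [Fintype β]
    [DecidableEq β] (f : α ≃ β) (g : Equiv.Perm α) :
    (f.permCongr g).cycleType = g.cycleType := by
  have hp : ∀ x : β, (fun _ : β => True) x := fun _ => trivial
  have : f.permCongr g = g.extendDomain (f.trans (Equiv.subtypeUnivEquiv hp).symm) := by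
    ext x
    rw [Equiv.Perm.extendDomain_apply_subtype _ _ (hp x)]
    rfl
  rw [this, Equiv.Perm.cycleType_extendDomain]

lemma exists_coord (a s : ℕ) [NeZero a] (ha : 1 ≤ a) (σ : Equiv.Perm (Fin (s * a)))
    (hcyc : HasFullCycleType σ (fun _ : Fin s => a)) :
    ∃ e : Fin s × ZMod a ≃ Fin (s * a), ∀ p : Fin s × ZMod a, σ (e p) = e (p.1, p.2 + 1) := by
  have hσct : σ.cycleType = Multiset.filter (fun x => x ≠ 1) (Multiset.replicate s a) := by
    rw [cycleType_of_hasFull hcyc, ofFn_const_eq]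
  let f : Fin s × ZMod a ≃ Fin (s * a) :=
    (Equiv.prodCongr (Equiv.refl (Fin s)) (Fintype.equivFinOfCardEq (ZMod.card a))).trans
      finProdFinEquiv
  let σ₁ : Equiv.Perm (Fin (s * a)) := f.permCongr (shiftPerm a s)
  have hct : σ₁.cycleType = σ.cycleType := by
    rw [show σ₁.cycleType = (shiftPerm a s).cycleType from cycleType_permCongr f _, hσct]
    rcases eq_or_lt_of_le ha with h1 | h2
    · have hsub : Subsingleton (ZMod a) := by rw [← h1]; infer_instance
      have : shiftPerm a s = 1 := by
        ext p : 1
        show ((p.1, p.2 + 1) : Fin s × ZMod a) = p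
        rw [Subsingleton.elim (p.2 + 1) p.2]
      rw [this, Equiv.Perm.cycleType_one, ← h1, filter_replicate_one]
    · rw [shiftPerm_cycleType a s h2, filter_replicate_ne_one h2]
  obtain ⟨c, hc⟩ := isConj_iff.mp (Equiv.Perm.isConj_of_cycleType_eq hct)
  refine ⟨f.trans c, fun p => ?_⟩
  have h1 : ∀ z, σ (c z) = c (σ₁ z) := by
    intro z
    rw [← hc]
    simp [Equiv.Perm.mul_apply]
  have h2 : σ₁ (f p) = f (p.1, p.2 + 1) := by
    simp only [σ₁, Equiv.permCongr_apply, Equiv.symm_apply_apply]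
    rfl
  simp only [Equiv.trans_apply, h1, h2]

section Main
variable (R : Type*) [Ring R] (a s : ℕ) [NeZero a] (σ : Equiv.Perm (Fin (s * a)))
  (e : Fin s × ZMod a ≃ Fin (s * a))
  (he : ∀ p : Fin s × ZMod a, σ (e p) = e (p.1, p.2 + 1))

include he

lemma shift_nat (A : Matrix (Fin (s * a)) (Fin (s * a)) R)
    (hA : ∀ i j, A i j = A (σ i) (σ j)) (i j : Fin s) (k l : ZMod a) (m : ℕ) :
    A (e (i, k + m)) (e (j, l + m)) = A (e (i, k)) (e (j, l)) := by
  induction m with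
  | zero => simp
  | succ m ih =>
    have h1 : (k + (m + 1 : ℕ) : ZMod a) = (k + m) + 1 := by push_cast; ring
    have h2 : (l + (m + 1 : ℕ) : ZMod a) = (l + m) + 1 := by push_cast; ring
    rw [h1, h2, show ((i, (k + m : ZMod a) + 1) : Fin s × ZMod a)
        = ((i, (k + m : ZMod a)).1, (i, (k + m : ZMod a)).2 + 1) from rfl, ← he,
      show ((j, (l + m : ZMod a) + 1) : Fin s × ZMod a)
        = ((j, (l + m : ZMod a)).1, (j, (l + m : ZMod a)).2 + 1) from rfl, ← he,
      ← hA, ih]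

lemma shift_zmod (A : Matrix (Fin (s * a)) (Fin (s * a)) R)
    (hA : ∀ i j, A i j = A (σ i) (σ j)) (i j : Fin s) (k l : ZMod a) :
    A (e (i, k)) (e (j, l)) = A (e (i, 0)) (e (j, l - k)) := by
  have := shift_nat R a s σ e he A hA i j 0 (l - k) k.val
  rw [ZMod.natCast_val, ZMod.cast_id, zero_add, sub_add_cancel] at this
  exact this

lemma mem_invariantSubring_iff {A : Matrix (Fin (s * a)) (Fin (s * a)) R} :
    A ∈ invariantSubring R σ ↔ ∀ i j, A i j = A (σ i) (σ j) := Iff.rfl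

noncomputable def Phi : (invariantSubring R σ) →
    Matrix (Fin s) (Fin s) (MonoidAlgebra R (Multiplicative (ZMod a))) :=
  fun A i j => MonoidAlgebra.ofCoeff (Finsupp.equivFunOnFinite.symm
    (fun g : Multiplicative (ZMod a) => (A : Matrix (Fin (s * a)) (Fin (s * a)) R) (e (i, 0)) (e (j, g.toAdd))))

omit he in
lemma Phi_apply (A : invariantSubring R σ) (i j : Fin s) (g : Multiplicative (ZMod a)) :
    (Phi R a s σ e A i j).coeff g
      = (A : Matrix (Fin (s * a)) (Fin (s * a)) R) (e (i, 0)) (e (j, g.toAdd)) := rfl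

noncomputable def Psi :
    Matrix (Fin s) (Fin s) (MonoidAlgebra R (Multiplicative (ZMod a))) →
      (invariantSubring R σ) :=
  fun M => ⟨Matrix.of (fun x y => (M (e.symm x).1 (e.symm y).1).coeff
      (Multiplicative.ofAdd ((e.symm y).2 - (e.symm x).2))), by
    intro x y
    have hx : e.symm (σ x) = ((e.symm x).1, (e.symm x).2 + 1) := by
      apply e.injective
      rw [Equiv.apply_symm_apply, ← he, Equiv.apply_symm_apply]
    have hy : e.symm (σ y) = ((e.symm y).1, (e.symm y).2 + 1) := by
      apply e.injective
      rw [Equiv.apply_symm_apply, ← he, Equiv.apply_symm_apply]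
    simp only [Matrix.of_apply, hx, hy, add_sub_add_right_eq_sub]⟩

lemma Psi_apply (M : Matrix (Fin s) (Fin s) (MonoidAlgebra R (Multiplicative (ZMod a))))
    (x y : Fin (s * a)) :
    (Psi R a s σ e he M : Matrix (Fin (s * a)) (Fin (s * a)) R) x y
      = (M (e.symm x).1 (e.symm y).1).coeff (Multiplicative.ofAdd ((e.symm y).2 - (e.symm x).2)) :=
  rfl

lemma left_inv_PhiPsi (A : invariantSubring R σ) : Psi R a s σ e he (Phi R a s σ e A) = A := by
  apply Subtype.ext
  funext x y
  rw [Psi_apply, Phi_apply]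
  have hA : ∀ i j, (A : Matrix (Fin (s * a)) (Fin (s * a)) R) i j
      = (A : Matrix (Fin (s * a)) (Fin (s * a)) R) (σ i) (σ j) := A.2
  have := shift_zmod R a s σ e he (A : Matrix (Fin (s * a)) (Fin (s * a)) R) hA
    (e.symm x).1 (e.symm y).1 (e.symm x).2 (e.symm y).2
  simp only [Prod.mk.eta, Equiv.apply_symm_apply] at this
  rw [show ((Multiplicative.ofAdd ((e.symm y).2 - (e.symm x).2)).toAdd)
      = (e.symm y).2 - (e.symm x).2 from rfl, ← this]

lemma right_inv_PhiPsi (M : Matrix (Fin s) (Fin s) (MonoidAlgebra R (Multiplicative (ZMod a)))) :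
    Phi R a s σ e (Psi R a s σ e he M) = M := by
  funext i j
  apply MonoidAlgebra.ext
  apply Finsupp.ext
  intro g
  rw [Phi_apply, Psi_apply]
  simp

lemma map_mul_Phi (A B : invariantSubring R σ) :
    Phi R a s σ e (A * B) = Phi R a s σ e A * Phi R a s σ e B := by
  funext i j
  apply MonoidAlgebra.ext
  apply Finsupp.ext
  intro g
  have hB : ∀ x y, (B : Matrix (Fin (s * a)) (Fin (s * a)) R) x y
      = (B : Matrix (Fin (s * a)) (Fin (s * a)) R) (σ x) (σ y) := B.2
  rw [Phi_apply]
  have hcoe : ((A * B : invariantSubring R σ) : Matrix (Fin (s * a)) (Fin (s * a)) R)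
      = (A : Matrix (Fin (s * a)) (Fin (s * a)) R) * (B : Matrix (Fin (s * a)) (Fin (s * a)) R) :=
    rfl
  rw [hcoe, Matrix.mul_apply,
    ← Equiv.sum_comp e (fun x => (A : Matrix (Fin (s * a)) (Fin (s * a)) R) (e (i, 0)) x
      * (B : Matrix (Fin (s * a)) (Fin (s * a)) R) x (e (j, g.toAdd))),
    Fintype.sum_prod_type]
  rw [show ((Phi R a s σ e A * Phi R a s σ e B) i j)
      = ∑ m, Phi R a s σ e A i m * Phi R a s σ e B m j from Matrix.mul_apply,
    MonoidAlgebra.coeff_sum, Finsupp.finset_sum_apply]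
  refine Finset.sum_congr rfl fun m _ => ?_
  have hsum : (Finsupp.sum (Phi R a s σ e A i m).coeff
        fun t b => b * (Phi R a s σ e B m j).coeff (t⁻¹ * g))
      = ∑ t : Multiplicative (ZMod a),
          ((Phi R a s σ e A i m).coeff t) * ((Phi R a s σ e B m j).coeff (t⁻¹ * g)) :=
    Finsupp.sum_fintype _ _ (fun t => zero_mul _)
  rw [MonoidAlgebra.coeff_mul_apply_left, hsum]
  refine Fintype.sum_equiv (Multiplicative.ofAdd (α := ZMod a)) _ _ fun h => ?_
  rw [Phi_apply, Phi_apply]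
  rw [shift_zmod R a s σ e he _ hB m j h g.toAdd]
  have harg : Multiplicative.toAdd ((Multiplicative.ofAdd h)⁻¹ * g)
      = Multiplicative.toAdd g - h := by
    rw [toAdd_mul, toAdd_inv, toAdd_ofAdd, ← sub_eq_neg_add]
  rw [harg, toAdd_ofAdd]

lemma map_add_Phi (A B : invariantSubring R σ) :
    Phi R a s σ e (A + B) = Phi R a s σ e A + Phi R a s σ e B := by
  funext i j
  apply MonoidAlgebra.ext
  apply Finsupp.ext
  intro g
  simp only [Matrix.add_apply, MonoidAlgebra.coeff_add, Finsupp.add_apply, Phi_apply]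
  rfl

noncomputable def theIso : (invariantSubring R σ) ≃+*
    Matrix (Fin s) (Fin s) (MonoidAlgebra R (Multiplicative (ZMod a))) where
  toFun := Phi R a s σ e
  invFun := Psi R a s σ e he
  left_inv := left_inv_PhiPsi R a s σ e he
  right_inv := right_inv_PhiPsi R a s σ e he
  map_mul' := map_mul_Phi R a s σ e he
  map_add' := map_add_Phi R a s σ e he

end Main

/-- Let `R` be a unitary ring, `a, s ≥ 1`, and let `σ ∈ Σ_{sa}` have cycle type
`(a, a, …, a)` with `a` appearing `s` times.  Then `S_{sa}(σ,R)` is isomorphic as a ring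
to the matrix ring `M_s(R[C_a])` over the group ring of the cyclic group of order `a`. -/
theorem invariantSubring_constant_cycleType (R : Type*) [Ring R] (a s : ℕ)
    (ha : 1 ≤ a) (hs : 1 ≤ s) (σ : Equiv.Perm (Fin (s * a)))
    (hcyc : HasFullCycleType σ (fun _ : Fin s => a)) :
    Nonempty ((invariantSubring R σ) ≃+*
      Matrix (Fin s) (Fin s) (MonoidAlgebra R (Multiplicative (ZMod a)))) := by
  haveI : NeZero a := ⟨by omega⟩
  obtain ⟨e, he⟩ := exists_coord a s ha σ hcyc
  exact ⟨theIso R a s σ e he⟩
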